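/- Let α : ℕ → ℕ with α(n) ≥ 1 and let 0 < δ < 1 be such that n/(w·α(n)) > 1 for all sufficiently large n and all w ∈ (1−δ, 1+δ), and assume α(n)/n → 0. Then there exist a constant C and N ∈ ℕ such that for all n ≥ N and all w ∈ (1−δ, 1+δ): |x''_{n,α}(w)/x_{n,α}(w)| ≤ C/α(n), |x'''_{n,α}(w)/x_{n,α}(w)| ≤ C/α(n), and |x⁗_{n,α}(w)/x_{n,α}(w)| ≤ C/α(n), where x''_{n,α}, x'''_{n,α}, x⁗_{n,α} denote the second, third and fourth derivatives of w ↦ x_{n,α}(w). -/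

import Mathlib

open Filter Set
open scoped Topology

namespace Stmt12

noncomputable section


def Fp (m : ℕ) (y : ℝ) : ℝ := ∑ j ∈ Finset.Icc 1 m, y ^ j

lemma contDiff_Fp (m : ℕ) : ContDiff ℝ 4 (Fp m) := by
  unfold Fp
  exact ContDiff.sum fun j _ => contDiff_id.pow j

lemma hasDerivAt_Fp (m : ℕ) (y : ℝ) :
    HasDerivAt (Fp m) (∑ j ∈ Finset.Icc 1 m, (j : ℝ) * y ^ (j - 1)) y :=
  HasDerivAt.fun_sum fun j _ => hasDerivAt_pow j y

lemma Fp_deriv_pos (m : ℕ) (hm : 1 ≤ m) (y : ℝ) (hy : 0 < y) :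
    0 < ∑ j ∈ Finset.Icc 1 m, (j : ℝ) * y ^ (j - 1) := by
  apply Finset.sum_pos
  · intro j hj
    have hj1 : 1 ≤ j := (Finset.mem_Icc.1 hj).1
    have : (0:ℝ) < j := by exact_mod_cast hj1
    exact mul_pos this (pow_pos hy _)
  · exact ⟨1, Finset.mem_Icc.2 ⟨le_refl 1, hm⟩⟩

lemma strictMonoOn_Fp (m : ℕ) (hm : 1 ≤ m) : StrictMonoOn (Fp m) (Set.Ici 0) := by
  intro a ha b hb hab
  apply Finset.sum_lt_sum_of_nonempty ⟨1, Finset.mem_Icc.2 ⟨le_refl 1, hm⟩⟩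
  intro j hj
  exact pow_lt_pow_left₀ hab ha (by have := (Finset.mem_Icc.1 hj).1; omega)

lemma contDiffAt_sol (m : ℕ) (hm : 1 ≤ m) (c : ℝ) (f : ℝ → ℝ)
    (hf : ∀ w : ℝ, 0 < w → 0 < f w ∧ Fp m (f w) = c / w) :
    ∀ w : ℝ, 0 < w → ContDiffAt ℝ 4 f w := by
  intro w0 hw0
  set a := f w0 with ha
  have hapos : 0 < a := (hf w0 hw0).1
  set d := ∑ j ∈ Finset.Icc 1 m, (j : ℝ) * a ^ (j - 1) with hd
  have hdpos : 0 < d := Fp_deriv_pos m hm a hapos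
  have hFa : HasDerivAt (Fp m) d a := hasDerivAt_Fp m a
  have hFd := hFa.hasFDerivAt_equiv hdpos.ne'
  have hFc : ContDiffAt ℝ 4 (Fp m) a := (contDiff_Fp m).contDiffAt
  have hn4 : (4 : WithTop ℕ∞) ≠ 0 := by norm_num
  have hS : HasStrictFDerivAt (Fp m)
      ((ContinuousLinearEquiv.unitsEquivAut ℝ (Units.mk0 d hdpos.ne')) : ℝ →L[ℝ] ℝ) a :=
    hFc.hasStrictFDerivAt' hFd hn4
  set g := hS.localInverse (Fp m) _ a with hg
  have hgc : ContDiffAt ℝ 4 g (Fp m a) := hFc.to_localInverse hFd hn4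
  have hfa : Fp m a = c / w0 := (hf w0 hw0).2
  have hcd : ContDiffAt ℝ 4 (fun w : ℝ => c / w) w0 :=
    contDiffAt_const.div contDiffAt_id hw0.ne'
  have hG : ContDiffAt ℝ 4 (fun w => g (c / w)) w0 := by
    refine ContDiffAt.comp w0 ?_ hcd
    rwa [hfa] at hgc
  apply hG.congr_of_eventuallyEq
  -- f =ᶠ[𝓝 w0] fun w => g (c / w)
  have hri : ∀ᶠ y in 𝓝 (Fp m a), Fp m (g y) = y := hS.eventually_right_inverse
  have hgcont : ContinuousAt g (Fp m a) := hS.localInverse_continuousAt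
  have hga : g (Fp m a) = a := hS.localInverse_apply_image
  have hgpos : ∀ᶠ y in 𝓝 (Fp m a), 0 < g y := by
    have : ∀ᶠ z in 𝓝 (g (Fp m a)), 0 < z := by
      rw [hga]; exact eventually_gt_nhds hapos
    exact hgcont.eventually this
  have hcw : Tendsto (fun w : ℝ => c / w) (𝓝 w0) (𝓝 (Fp m a)) := by
    rw [hfa]
    exact (continuousAt_const.div continuousAt_id hw0.ne')
  have h1 : ∀ᶠ w in 𝓝 w0, Fp m (g (c / w)) = c / w := hcw.eventually hri
  have h2 : ∀ᶠ w in 𝓝 w0, 0 < g (c / w) := hcw.eventually hgpos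
  have h3 : ∀ᶠ w in 𝓝 w0, (0:ℝ) < w := eventually_gt_nhds hw0
  filter_upwards [h1, h2, h3] with w e1 e2 e3
  have hfw := hf w e3
  exact (strictMonoOn_Fp m hm).injOn (le_of_lt hfw.1) (le_of_lt e2) (by rw [hfw.2, e1])


lemma hasDerivAt_T (m : ℕ) (k : ℕ) (L : ℝ → ℝ) (w l : ℝ) (hL : HasDerivAt L l w) :
    HasDerivAt (fun v => ∑ j ∈ Finset.Icc 1 m, (j : ℝ) ^ k * Real.exp (j * L v))
      ((∑ j ∈ Finset.Icc 1 m, (j : ℝ) ^ (k + 1) * Real.exp (j * L w)) * l) w := by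
  have h : ∀ j ∈ Finset.Icc 1 m, HasDerivAt (fun v => (j : ℝ) ^ k * Real.exp (j * L v))
      ((j : ℝ) ^ (k + 1) * Real.exp ((j : ℝ) * L w) * l) w := by
    intro j _
    have h1 : HasDerivAt (fun v => (j : ℝ) * L v) ((j : ℝ) * l) w := hL.const_mul _
    have h2 := (h1.exp).const_mul ((j : ℝ) ^ k)
    exact h2.congr_deriv (by ring)
  have := HasDerivAt.fun_sum h
  exact this.congr_deriv (by rw [Finset.sum_mul])


lemma hasDerivAt_div_pow (a : ℝ) (k : ℕ) (v : ℝ) (hv : v ≠ 0) :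
    HasDerivAt (fun u : ℝ => a / u ^ k) (-(k * a * v ^ (k - 1)) / v ^ (2 * k)) v := by
  have h := ((hasDerivAt_pow k v).inv (pow_ne_zero k hv)).const_mul a
  have hfun : (fun u : ℝ => a * (u ^ k)⁻¹) = fun u : ℝ => a / u ^ k := by
    funext u; rw [div_eq_mul_inv]
  replace h : HasDerivAt (fun u : ℝ => a / u ^ k) (a * (-(↑k * v ^ (k - 1)) / (v ^ k) ^ 2)) v := by rw [← hfun]; exact h
  convert h using 1
  rw [mul_div_assoc'] at *
  rw [div_eq_div_iff (by positivity) (by positivity), ← pow_mul]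
  ring


lemma derivEq {f g : ℝ → ℝ} {af ag v : ℝ} (hv : 0 < v) (heq : ∀ u : ℝ, 0 < u → f u = g u)
    (h1 : HasDerivAt f af v) (h2 : HasDerivAt g ag v) : af = ag := by
  have h1' : HasDerivAt g af v :=
    h1.congr_of_eventuallyEq
      (Filter.eventually_of_mem (Ioi_mem_nhds hv) fun u hu => (heq u hu).symm)
  exact h1'.unique h2

lemma T_pos (m k : ℕ) (hm : 1 ≤ m) (X : ℝ) :
    0 < ∑ j ∈ Finset.Icc 1 m, (j : ℝ) ^ k * Real.exp (j * X) := by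
  apply Finset.sum_pos
  · intro j hj
    have hj1 : 1 ≤ j := (Finset.mem_Icc.1 hj).1
    have : (0:ℝ) < j := by exact_mod_cast hj1
    positivity
  · exact ⟨1, Finset.mem_Icc.2 ⟨le_refl 1, hm⟩⟩

lemma T_le (m k : ℕ) (X : ℝ) :
    ∑ j ∈ Finset.Icc 1 m, (j : ℝ) ^ k * Real.exp (j * X) ≤
      (m : ℝ) ^ k * ∑ j ∈ Finset.Icc 1 m, (j : ℝ) ^ 0 * Real.exp (j * X) := by
  rw [Finset.mul_sum]
  apply Finset.sum_le_sum
  intro j hj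
  have hjm : j ≤ m := (Finset.mem_Icc.1 hj).2
  have h1 : (j : ℝ) ^ k ≤ (m : ℝ) ^ k :=
    pow_le_pow_left₀ (by positivity) (by exact_mod_cast hjm) k
  rw [pow_zero, one_mul]
  exact mul_le_mul_of_nonneg_right h1 (Real.exp_pos _).le

lemma sum_Icc_cast (m : ℕ) : (∑ j ∈ Finset.Icc 1 m, (j : ℝ)) = m * (m + 1) / 2 := by
  induction m with
  | zero => simp
  | succ k ih =>
      rw [Finset.sum_Icc_succ_top (by omega : 1 ≤ k + 1), ih]
      push_cast
      ring

lemma T_cheb (m : ℕ) (hm : 1 ≤ m) (X : ℝ) (hX : 0 ≤ X) :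
    (m : ℝ) / 2 * ∑ j ∈ Finset.Icc 1 m, (j : ℝ) ^ 0 * Real.exp (j * X) ≤
      ∑ j ∈ Finset.Icc 1 m, (j : ℝ) ^ 1 * Real.exp (j * X) := by
  have hm0 : (0:ℝ) < m := by exact_mod_cast hm
  have hmono : MonovaryOn (fun j : ℕ => (j : ℝ)) (fun j : ℕ => Real.exp (j * X))
      (Finset.Icc 1 m : Finset ℕ) := by
    intro i _ j _ hg
    have h1 : (i : ℝ) * X < (j : ℝ) * X := Real.exp_lt_exp.1 hg
    by_contra hc
    push_neg at hc
    have := mul_le_mul_of_nonneg_right hc.le hX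
    linarith
  have hcheb := hmono.sum_mul_sum_le_card_mul_sum
  rw [sum_Icc_cast, Nat.card_Icc] at hcheb
  simp only [Nat.add_sub_cancel] at hcheb
  have hS0 : (0:ℝ) ≤ ∑ j ∈ Finset.Icc 1 m, Real.exp (j * X) :=
    Finset.sum_nonneg fun j _ => (Real.exp_pos _).le
  simp only [pow_zero, one_mul, pow_one]
  have key : (m : ℝ) * ((m : ℝ) / 2 * ∑ j ∈ Finset.Icc 1 m, Real.exp (j * X)) ≤
      (m : ℝ) * ∑ j ∈ Finset.Icc 1 m, (j : ℝ) * Real.exp (j * X) := by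
    have h2 : (0:ℝ) ≤ (m : ℝ) * ∑ j ∈ Finset.Icc 1 m, Real.exp (j * X) :=
      mul_nonneg hm0.le hS0
    nlinarith [hcheb]
  exact le_of_mul_le_mul_left key hm0




set_option maxHeartbeats 1000000 in
lemma bounds (K m w t0 t1 t2 t3 t4 l1 l2 l3 l4 : ℝ)
    (hK : 2 ≤ K) (hKw : 2 ≤ K * w) (hw0 : 0 < w) (hm1 : 1 ≤ m)
    (ht0p : 0 < t0) (ht1p : 0 < t1) (ht2p : 0 < t2) (ht3p : 0 < t3) (ht4p : 0 < t4)
    (hmt0 : m * t0 ≤ 2 * t1)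
    (ht2l : t2 ≤ m ^ 2 * t0) (ht3l : t3 ≤ m ^ 3 * t0) (ht4l : t4 ≤ m ^ 4 * t0)
    (hE1 : t1 * l1 * w ^ 2 = -(t0 * w))
    (hE2 : (t2 * l1 ^ 2 + t1 * l2) * w ^ 3 = 2 * (t0 * w))
    (hE3 : (t3 * l1 ^ 3 + 3 * (t2 * (l1 * l2)) + t1 * l3) * w ^ 4 = -(6 * (t0 * w)))
    (hE4 : (t4 * l1 ^ 4 + 6 * t3 * l1 ^ 2 * l2 + 3 * t2 * l2 ^ 2 + 4 * t2 * l1 * l3 + t1 * l4)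
        * w ^ 5 = 24 * (t0 * w)) :
    m * |l1| ≤ K ∧ m * |l2| ≤ 3 * K ^ 2 ∧ m * |l3| ≤ 22 * K ^ 3 ∧ m * |l4| ≤ 271 * K ^ 4 := by
  have hm0 : (0:ℝ) < m := lt_of_lt_of_le one_pos hm1
  have hK0 : (0:ℝ) < K := lt_of_lt_of_le two_pos hK
  have htw : 0 < t0 * w := mul_pos ht0p hw0
  have h4 : 4 ≤ (K * w) ^ 2 := by nlinarith [hKw, sq_nonneg (K * w - 2)]
  have h8 : 8 ≤ (K * w) ^ 3 := by
    have := mul_le_mul h4 hKw (by norm_num) (by positivity : (0:ℝ) ≤ (K * w) ^ 2)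
    calc (8:ℝ) = 4 * 2 := by norm_num
      _ ≤ (K * w) ^ 2 * (K * w) := this
      _ = (K * w) ^ 3 := by ring
  have h16 : 16 ≤ (K * w) ^ 4 := by
    have := mul_le_mul h4 h4 (by norm_num) (by positivity : (0:ℝ) ≤ (K * w) ^ 2)
    calc (16:ℝ) = 4 * 4 := by norm_num
      _ ≤ (K * w) ^ 2 * (K * w) ^ 2 := this
      _ = (K * w) ^ 4 := by ring
  -- generic: m * (a * (t0*w)) ≤ ...
  have hmt0w : m * (t0 * w) ≤ 2 * (t1 * w) := by
    have := mul_le_mul_of_nonneg_right hmt0 hw0.le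
    linarith [this]
  -- Level 1
  have e1 : t1 * (-l1) * w ^ 2 = t0 * w := by linear_combination -hE1
  have hl1neg : 0 ≤ -l1 := by
    nlinarith [e1, htw, mul_pos ht1p (pow_pos hw0 2)]
  have habs1 : |l1| = -l1 := abs_of_nonpos (by linarith)
  have b1 : m * |l1| ≤ K := by
    rw [habs1]
    have key1 : (m * -l1) * (t1 * w ^ 2) ≤ K * (t1 * w ^ 2) := by
      have h1 : (m * -l1) * (t1 * w ^ 2) = m * (t0 * w) := by linear_combination m * e1
      have h3 : 2 * (t1 * w) ≤ (K * w) * (t1 * w) :=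
        mul_le_mul_of_nonneg_right hKw (mul_pos ht1p hw0).le
      have h5 : (K * w) * (t1 * w) = K * (t1 * w ^ 2) := by ring
      linarith
    exact le_of_mul_le_mul_right key1 (by positivity)
  have hml1nn : (0:ℝ) ≤ m * |l1| := mul_nonneg hm0.le (abs_nonneg l1)
  have hml1sq : (m * |l1|) ^ 2 ≤ K ^ 2 := pow_le_pow_left₀ hml1nn b1 2
  have hml1cube : (m * |l1|) ^ 3 ≤ K ^ 3 := pow_le_pow_left₀ hml1nn b1 3
  have hml1four : (m * |l1|) ^ 4 ≤ K ^ 4 := pow_le_pow_left₀ hml1nn b1 4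
  -- Level 2
  have e2 : t1 * l2 * w ^ 3 = 2 * (t0 * w) - t2 * l1 ^ 2 * w ^ 3 := by linear_combination hE2
  have ha2 : (m * |l2|) * (t1 * w ^ 3) ≤
      m * (2 * (t0 * w)) + m * (t2 * l1 ^ 2 * w ^ 3) := by
    have hq : (m * |l2|) * (t1 * w ^ 3) = m * |t1 * l2 * w ^ 3| := by
      rw [abs_mul, abs_mul, abs_of_pos ht1p, abs_of_pos (pow_pos hw0 3)]; ring
    rw [hq, e2]
    have htri : |2 * (t0 * w) - t2 * l1 ^ 2 * w ^ 3| ≤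
        2 * (t0 * w) + t2 * l1 ^ 2 * w ^ 3 := by
      calc |2 * (t0 * w) - t2 * l1 ^ 2 * w ^ 3|
          ≤ |2 * (t0 * w)| + |t2 * l1 ^ 2 * w ^ 3| := abs_sub _ _
        _ = 2 * (t0 * w) + t2 * l1 ^ 2 * w ^ 3 := by
            rw [abs_of_pos (by positivity), abs_of_nonneg (by positivity)]
    have := mul_le_mul_of_nonneg_left htri hm0.le
    linarith
  have p2a : m * (2 * (t0 * w)) ≤ K ^ 2 * (t1 * w ^ 3) := by
    have h3 : 4 * (t1 * w) ≤ (K * w) ^ 2 * (t1 * w) :=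
      mul_le_mul_of_nonneg_right h4 (mul_pos ht1p hw0).le
    have h5 : (K * w) ^ 2 * (t1 * w) = K ^ 2 * (t1 * w ^ 3) := by ring
    linarith
  have p2b : m * (t2 * l1 ^ 2 * w ^ 3) ≤ 2 * K ^ 2 * (t1 * w ^ 3) := by
    have h1 : m * (t2 * l1 ^ 2) ≤ (m * t0) * (m * |l1|) ^ 2 := by
      have h0 : t2 * l1 ^ 2 ≤ (m ^ 2 * t0) * l1 ^ 2 :=
        mul_le_mul_of_nonneg_right ht2l (sq_nonneg l1)
      have h0' := mul_le_mul_of_nonneg_left h0 hm0.le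
      have : m * ((m ^ 2 * t0) * l1 ^ 2) = (m * t0) * (m * |l1|) ^ 2 := by
        rw [mul_pow, sq_abs]; ring
      linarith
    have h3 : (m * t0) * (m * |l1|) ^ 2 ≤ (2 * t1) * K ^ 2 :=
      mul_le_mul hmt0 hml1sq (by positivity) (by positivity)
    have h6 := mul_le_mul_of_nonneg_right (le_trans h1 h3) (pow_pos hw0 3).le
    have h7 : m * (t2 * l1 ^ 2) * w ^ 3 = m * (t2 * l1 ^ 2 * w ^ 3) := by ring
    have h8' : (2 * t1) * K ^ 2 * w ^ 3 = 2 * K ^ 2 * (t1 * w ^ 3) := by ring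
    linarith
  have b2 : m * |l2| ≤ 3 * K ^ 2 := by
    have key2 : (m * |l2|) * (t1 * w ^ 3) ≤ (3 * K ^ 2) * (t1 * w ^ 3) := by linarith
    exact le_of_mul_le_mul_right key2 (by positivity)
  have hl1n2 : |l1| ^ 2 = l1 ^ 2 := sq_abs l1
  -- generic piece bound
  have gen : ∀ (k : ℕ) (tk B P : ℝ), 0 ≤ P → 0 ≤ B → tk ≤ m ^ k * t0 → m ^ k * P ≤ B →
      m * (tk * P) ≤ (2 * t1) * B := by
    intro k tk B P hP hB htk hPB
    have h1 := mul_le_mul_of_nonneg_left (mul_le_mul_of_nonneg_right htk hP) hm0.le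
    have h2 : m * ((m ^ k * t0) * P) = (m * t0) * (m ^ k * P) := by ring
    have h3 : (m * t0) * (m ^ k * P) ≤ (2 * t1) * B :=
      mul_le_mul hmt0 hPB (by positivity) (by positivity)
    linarith
  -- Level 3
  have e3 : t1 * l3 * w ^ 4 =
      -(6 * (t0 * w)) - t3 * l1 ^ 3 * w ^ 4 - 3 * (t2 * (l1 * l2)) * w ^ 4 := by
    linear_combination hE3
  have ha3 : (m * |l3|) * (t1 * w ^ 4) ≤
      m * (6 * (t0 * w)) + m * (t3 * |l1| ^ 3 * w ^ 4) + m * (3 * (t2 * (|l1| * |l2|)) * w ^ 4) := by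
    have hq : (m * |l3|) * (t1 * w ^ 4) = m * |t1 * l3 * w ^ 4| := by
      rw [abs_mul, abs_mul, abs_of_pos ht1p, abs_of_pos (pow_pos hw0 4)]; ring
    rw [hq, e3]
    have htri : |-(6 * (t0 * w)) - t3 * l1 ^ 3 * w ^ 4 - 3 * (t2 * (l1 * l2)) * w ^ 4| ≤
        6 * (t0 * w) + t3 * |l1| ^ 3 * w ^ 4 + 3 * (t2 * (|l1| * |l2|)) * w ^ 4 := by
      calc |-(6 * (t0 * w)) - t3 * l1 ^ 3 * w ^ 4 - 3 * (t2 * (l1 * l2)) * w ^ 4|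
          ≤ |-(6 * (t0 * w)) - t3 * l1 ^ 3 * w ^ 4| + |3 * (t2 * (l1 * l2)) * w ^ 4| :=
            abs_sub _ _
        _ ≤ |-(6 * (t0 * w))| + |t3 * l1 ^ 3 * w ^ 4| + |3 * (t2 * (l1 * l2)) * w ^ 4| := by
            linarith [abs_sub (-(6 * (t0 * w))) (t3 * l1 ^ 3 * w ^ 4)]
        _ = 6 * (t0 * w) + t3 * |l1| ^ 3 * w ^ 4 + 3 * (t2 * (|l1| * |l2|)) * w ^ 4 := by
            rw [abs_neg, abs_of_pos (by positivity : (0:ℝ) < 6 * (t0 * w))]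
            rw [abs_mul, abs_mul, abs_pow, abs_of_pos ht3p, abs_of_pos (pow_pos hw0 4)]
            rw [abs_mul, abs_mul, abs_mul, abs_mul, abs_of_pos ht2p,
              abs_of_pos (pow_pos hw0 4)]
            simp [abs_of_nonneg]
    have := mul_le_mul_of_nonneg_left htri hm0.le
    linarith
  have p3a : m * (6 * (t0 * w)) ≤ 2 * K ^ 3 * (t1 * w ^ 4) := by
    have h3 := mul_le_mul_of_nonneg_right h8 (mul_pos ht1p hw0).le
    have h5 : (K * w) ^ 3 * (t1 * w) = K ^ 3 * (t1 * w ^ 4) := by ring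
    linarith [(mul_pos ht1p hw0).le]
  have p3b : m * (t3 * |l1| ^ 3 * w ^ 4) ≤ 2 * K ^ 3 * (t1 * w ^ 4) := by
    have hPB : m ^ 3 * |l1| ^ 3 ≤ K ^ 3 := by
      have : m ^ 3 * |l1| ^ 3 = (m * |l1|) ^ 3 := by ring
      rw [this]; exact hml1cube
    have h6 := mul_le_mul_of_nonneg_right
      (gen 3 t3 (K ^ 3) (|l1| ^ 3) (by positivity) (by positivity) ht3l hPB)
      (pow_pos hw0 4).le
    have h7 : m * (t3 * |l1| ^ 3) * w ^ 4 = m * (t3 * |l1| ^ 3 * w ^ 4) := by ring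
    have h8' : (2 * t1) * K ^ 3 * w ^ 4 = 2 * K ^ 3 * (t1 * w ^ 4) := by ring
    linarith
  have p3c : m * (3 * (t2 * (|l1| * |l2|)) * w ^ 4) ≤ 18 * K ^ 3 * (t1 * w ^ 4) := by
    have hPB : m ^ 2 * (|l1| * |l2|) ≤ K * (3 * K ^ 2) := by
      have heq : m ^ 2 * (|l1| * |l2|) = (m * |l1|) * (m * |l2|) := by ring
      rw [heq]
      exact mul_le_mul b1 b2 (mul_nonneg hm0.le (abs_nonneg _)) hK0.le
    have h6 := mul_le_mul_of_nonneg_right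
      (gen 2 t2 (K * (3 * K ^ 2)) (|l1| * |l2|) (by positivity) (by positivity) ht2l hPB)
      (pow_pos hw0 4).le
    have h7 : m * (3 * (t2 * (|l1| * |l2|)) * w ^ 4) = 3 * (m * (t2 * (|l1| * |l2|)) * w ^ 4) := by
      ring
    have h8' : 3 * ((2 * t1) * (K * (3 * K ^ 2)) * w ^ 4) = 18 * K ^ 3 * (t1 * w ^ 4) := by ring
    linarith
  have b3 : m * |l3| ≤ 22 * K ^ 3 := by
    have key3 : (m * |l3|) * (t1 * w ^ 4) ≤ (22 * K ^ 3) * (t1 * w ^ 4) := by linarith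
    exact le_of_mul_le_mul_right key3 (by positivity)
  -- Level 4
  have e4 : t1 * l4 * w ^ 5 = 24 * (t0 * w) - t4 * l1 ^ 4 * w ^ 5 - 6 * t3 * l1 ^ 2 * l2 * w ^ 5
      - 3 * t2 * l2 ^ 2 * w ^ 5 - 4 * t2 * l1 * l3 * w ^ 5 := by
    linear_combination hE4
  have ha4 : (m * |l4|) * (t1 * w ^ 5) ≤
      m * (24 * (t0 * w)) + m * (t4 * |l1| ^ 4 * w ^ 5) + m * (6 * t3 * |l1| ^ 2 * |l2| * w ^ 5)
      + m * (3 * t2 * |l2| ^ 2 * w ^ 5) + m * (4 * t2 * (|l1| * |l3|) * w ^ 5) := by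
    have hq : (m * |l4|) * (t1 * w ^ 5) = m * |t1 * l4 * w ^ 5| := by
      rw [abs_mul, abs_mul, abs_of_pos ht1p, abs_of_pos (pow_pos hw0 5)]; ring
    rw [hq, e4]
    have habs_a : |t4 * l1 ^ 4 * w ^ 5| = t4 * |l1| ^ 4 * w ^ 5 := by
      rw [abs_mul, abs_mul, abs_pow, abs_of_pos ht4p, abs_of_pos (pow_pos hw0 5)]
    have habs_b : |6 * t3 * l1 ^ 2 * l2 * w ^ 5| = 6 * t3 * |l1| ^ 2 * |l2| * w ^ 5 := by
      rw [abs_mul, abs_mul, abs_mul, abs_pow,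
        abs_of_pos (by positivity : (0:ℝ) < 6 * t3), abs_of_pos (pow_pos hw0 5)]
    have habs_c : |3 * t2 * l2 ^ 2 * w ^ 5| = 3 * t2 * |l2| ^ 2 * w ^ 5 := by
      rw [abs_mul, abs_mul, abs_pow,
        abs_of_pos (by positivity : (0:ℝ) < 3 * t2), abs_of_pos (pow_pos hw0 5)]
    have habs_d : |4 * t2 * l1 * l3 * w ^ 5| = 4 * t2 * (|l1| * |l3|) * w ^ 5 := by
      rw [abs_mul, abs_mul, abs_mul,
        abs_of_pos (by positivity : (0:ℝ) < 4 * t2), abs_of_pos (pow_pos hw0 5)]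
      ring
    have htri : |24 * (t0 * w) - t4 * l1 ^ 4 * w ^ 5 - 6 * t3 * l1 ^ 2 * l2 * w ^ 5
        - 3 * t2 * l2 ^ 2 * w ^ 5 - 4 * t2 * l1 * l3 * w ^ 5| ≤
        24 * (t0 * w) + t4 * |l1| ^ 4 * w ^ 5 + 6 * t3 * |l1| ^ 2 * |l2| * w ^ 5
        + 3 * t2 * |l2| ^ 2 * w ^ 5 + 4 * t2 * (|l1| * |l3|) * w ^ 5 := by
      have s1 := abs_sub (24 * (t0 * w) - t4 * l1 ^ 4 * w ^ 5 - 6 * t3 * l1 ^ 2 * l2 * w ^ 5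
        - 3 * t2 * l2 ^ 2 * w ^ 5) (4 * t2 * l1 * l3 * w ^ 5)
      have s2 := abs_sub (24 * (t0 * w) - t4 * l1 ^ 4 * w ^ 5 - 6 * t3 * l1 ^ 2 * l2 * w ^ 5)
        (3 * t2 * l2 ^ 2 * w ^ 5)
      have s3 := abs_sub (24 * (t0 * w) - t4 * l1 ^ 4 * w ^ 5) (6 * t3 * l1 ^ 2 * l2 * w ^ 5)
      have s4 := abs_sub (24 * (t0 * w)) (t4 * l1 ^ 4 * w ^ 5)
      rw [habs_a] at s4
      rw [habs_b] at s3
      rw [habs_c] at s2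
      rw [habs_d] at s1
      rw [abs_of_pos (by positivity : (0:ℝ) < 24 * (t0 * w))] at s4
      linarith
    have := mul_le_mul_of_nonneg_left htri hm0.le
    linarith
  have p4a : m * (24 * (t0 * w)) ≤ 3 * K ^ 4 * (t1 * w ^ 5) := by
    have h3 := mul_le_mul_of_nonneg_right h16 (mul_pos ht1p hw0).le
    have h5 : (K * w) ^ 4 * (t1 * w) = K ^ 4 * (t1 * w ^ 5) := by ring
    linarith [(mul_pos ht1p hw0).le]
  have p4b : m * (t4 * |l1| ^ 4 * w ^ 5) ≤ 2 * K ^ 4 * (t1 * w ^ 5) := by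
    have hPB : m ^ 4 * |l1| ^ 4 ≤ K ^ 4 := by
      have : m ^ 4 * |l1| ^ 4 = (m * |l1|) ^ 4 := by ring
      rw [this]; exact hml1four
    have h6 := mul_le_mul_of_nonneg_right
      (gen 4 t4 (K ^ 4) (|l1| ^ 4) (by positivity) (by positivity) ht4l hPB)
      (pow_pos hw0 5).le
    have h7 : m * (t4 * |l1| ^ 4 * w ^ 5) = m * (t4 * |l1| ^ 4) * w ^ 5 := by ring
    have h8' : (2 * t1) * K ^ 4 * w ^ 5 = 2 * K ^ 4 * (t1 * w ^ 5) := by ring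
    linarith
  have p4c : m * (6 * t3 * |l1| ^ 2 * |l2| * w ^ 5) ≤ 36 * K ^ 4 * (t1 * w ^ 5) := by
    have hPB : m ^ 3 * (|l1| ^ 2 * |l2|) ≤ K ^ 2 * (3 * K ^ 2) := by
      have heq : m ^ 3 * (|l1| ^ 2 * |l2|) = (m * |l1|) ^ 2 * (m * |l2|) := by ring
      rw [heq]
      exact mul_le_mul hml1sq b2 (mul_nonneg hm0.le (abs_nonneg _)) (by positivity)
    have h6 := mul_le_mul_of_nonneg_right
      (gen 3 t3 (K ^ 2 * (3 * K ^ 2)) (|l1| ^ 2 * |l2|) (by positivity) (by positivity)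
        ht3l hPB) (pow_pos hw0 5).le
    have h7 : m * (6 * t3 * |l1| ^ 2 * |l2| * w ^ 5)
        = 6 * (m * (t3 * (|l1| ^ 2 * |l2|)) * w ^ 5) := by ring
    have h8' : 6 * ((2 * t1) * (K ^ 2 * (3 * K ^ 2)) * w ^ 5) = 36 * K ^ 4 * (t1 * w ^ 5) := by
      ring
    linarith
  have p4d : m * (3 * t2 * |l2| ^ 2 * w ^ 5) ≤ 54 * K ^ 4 * (t1 * w ^ 5) := by
    have hml2sq : (m * |l2|) ^ 2 ≤ (3 * K ^ 2) ^ 2 :=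
      pow_le_pow_left₀ (mul_nonneg hm0.le (abs_nonneg _)) b2 2
    have hPB : m ^ 2 * |l2| ^ 2 ≤ (3 * K ^ 2) ^ 2 := by
      have : m ^ 2 * |l2| ^ 2 = (m * |l2|) ^ 2 := by ring
      rw [this]; exact hml2sq
    have h6 := mul_le_mul_of_nonneg_right
      (gen 2 t2 ((3 * K ^ 2) ^ 2) (|l2| ^ 2) (by positivity) (by positivity) ht2l hPB)
      (pow_pos hw0 5).le
    have h7 : m * (3 * t2 * |l2| ^ 2 * w ^ 5) = 3 * (m * (t2 * |l2| ^ 2) * w ^ 5) := by ring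
    have h8' : 3 * ((2 * t1) * ((3 * K ^ 2) ^ 2) * w ^ 5) = 54 * K ^ 4 * (t1 * w ^ 5) := by ring
    linarith
  have p4e : m * (4 * t2 * (|l1| * |l3|) * w ^ 5) ≤ 176 * K ^ 4 * (t1 * w ^ 5) := by
    have hPB : m ^ 2 * (|l1| * |l3|) ≤ K * (22 * K ^ 3) := by
      have heq : m ^ 2 * (|l1| * |l3|) = (m * |l1|) * (m * |l3|) := by ring
      rw [heq]
      exact mul_le_mul b1 b3 (mul_nonneg hm0.le (abs_nonneg _)) hK0.le
    have h6 := mul_le_mul_of_nonneg_right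
      (gen 2 t2 (K * (22 * K ^ 3)) (|l1| * |l3|) (by positivity) (by positivity) ht2l hPB)
      (pow_pos hw0 5).le
    have h7 : m * (4 * t2 * (|l1| * |l3|) * w ^ 5) = 4 * (m * (t2 * (|l1| * |l3|)) * w ^ 5) := by
      ring
    have h8' : 4 * ((2 * t1) * (K * (22 * K ^ 3)) * w ^ 5) = 176 * K ^ 4 * (t1 * w ^ 5) := by ring
    linarith
  have b4 : m * |l4| ≤ 271 * K ^ 4 := by
    have key4 : (m * |l4|) * (t1 * w ^ 5) ≤ (271 * K ^ 4) * (t1 * w ^ 5) := by linarith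
    exact le_of_mul_le_mul_right key4 (by positivity)
  exact ⟨b1, b2, b3, b4⟩




lemma finalcomb (K M l1 l2 l3 l4 : ℝ) (hK : 2 ≤ K) (hM : 1 ≤ M)
    (b1 : M * |l1| ≤ K) (b2 : M * |l2| ≤ 3 * K ^ 2) (b3 : M * |l3| ≤ 22 * K ^ 3)
    (b4 : M * |l4| ≤ 271 * K ^ 4) :
    |l1 ^ 2 + l2| * M ≤ 405 * K ^ 4 ∧
    |l1 ^ 3 + 3 * (l1 * l2) + l3| * M ≤ 405 * K ^ 4 ∧
    |l1 ^ 4 + 6 * (l1 ^ 2 * l2) + 3 * l2 ^ 2 + 4 * (l1 * l3) + l4| * M ≤ 405 * K ^ 4 := by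
  have hM0 : (0:ℝ) < M := lt_of_lt_of_le one_pos hM
  have hK0 : (0:ℝ) < K := lt_of_lt_of_le two_pos hK
  have hK1 : (1:ℝ) ≤ K := by linarith
  have c1 : |l1| ≤ K := le_trans (le_mul_of_one_le_left (abs_nonneg _) hM) b1
  have c2 : |l2| ≤ 3 * K ^ 2 := le_trans (le_mul_of_one_le_left (abs_nonneg _) hM) b2
  have c3 : |l3| ≤ 22 * K ^ 3 := le_trans (le_mul_of_one_le_left (abs_nonneg _) hM) b3
  have hK24 : K ^ 2 ≤ K ^ 4 := pow_le_pow_right₀ hK1 (by norm_num)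
  have hK34 : K ^ 3 ≤ K ^ 4 := pow_le_pow_right₀ hK1 (by norm_num)
  have hK4nn : (0:ℝ) ≤ K ^ 4 := by positivity
  have q1 : M * |l1| ^ 2 ≤ K ^ 2 := by
    have h := mul_le_mul b1 c1 (abs_nonneg _) hK0.le
    calc M * |l1| ^ 2 = (M * |l1|) * |l1| := by ring
      _ ≤ K * K := h
      _ = K ^ 2 := by ring
  have q2 : M * |l1| ^ 3 ≤ K ^ 3 := by
    have h := mul_le_mul b1 (pow_le_pow_left₀ (abs_nonneg _) c1 2) (by positivity) hK0.le
    calc M * |l1| ^ 3 = (M * |l1|) * |l1| ^ 2 := by ring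
      _ ≤ K * K ^ 2 := h
      _ = K ^ 3 := by ring
  have q3 : M * |l1| ^ 4 ≤ K ^ 4 := by
    have h := mul_le_mul b1 (pow_le_pow_left₀ (abs_nonneg _) c1 3) (by positivity) hK0.le
    calc M * |l1| ^ 4 = (M * |l1|) * |l1| ^ 3 := by ring
      _ ≤ K * K ^ 3 := h
      _ = K ^ 4 := by ring
  have q4 : M * (|l1| * |l2|) ≤ 3 * K ^ 3 := by
    have h := mul_le_mul b1 c2 (abs_nonneg _) hK0.le
    calc M * (|l1| * |l2|) = (M * |l1|) * |l2| := by ring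
      _ ≤ K * (3 * K ^ 2) := h
      _ = 3 * K ^ 3 := by ring
  have q5 : M * (|l1| ^ 2 * |l2|) ≤ 3 * K ^ 4 := by
    have hin : |l1| * |l2| ≤ K * (3 * K ^ 2) := mul_le_mul c1 c2 (abs_nonneg _) hK0.le
    have h := mul_le_mul b1 hin (by positivity) hK0.le
    calc M * (|l1| ^ 2 * |l2|) = (M * |l1|) * (|l1| * |l2|) := by ring
      _ ≤ K * (K * (3 * K ^ 2)) := h
      _ = 3 * K ^ 4 := by ring
  have q6 : M * |l2| ^ 2 ≤ 9 * K ^ 4 := by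
    have h := mul_le_mul b2 c2 (abs_nonneg _) (by positivity)
    calc M * |l2| ^ 2 = (M * |l2|) * |l2| := by ring
      _ ≤ (3 * K ^ 2) * (3 * K ^ 2) := h
      _ = 9 * K ^ 4 := by ring
  have q7 : M * (|l1| * |l3|) ≤ 22 * K ^ 4 := by
    have h := mul_le_mul b1 c3 (abs_nonneg _) hK0.le
    calc M * (|l1| * |l3|) = (M * |l1|) * |l3| := by ring
      _ ≤ K * (22 * K ^ 3) := h
      _ = 22 * K ^ 4 := by ring
  refine ⟨?_, ?_, ?_⟩
  · have t : |l1 ^ 2 + l2| ≤ |l1| ^ 2 + |l2| := by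
      calc |l1 ^ 2 + l2| ≤ |l1 ^ 2| + |l2| := abs_add_le _ _
        _ = |l1| ^ 2 + |l2| := by rw [abs_pow]
    have := mul_le_mul_of_nonneg_left t hM0.le
    linarith
  · have t : |l1 ^ 3 + 3 * (l1 * l2) + l3| ≤ |l1| ^ 3 + 3 * (|l1| * |l2|) + |l3| := by
      have e : |3 * (l1 * l2)| = 3 * (|l1| * |l2|) := by
        rw [abs_mul, abs_mul, abs_of_pos (by norm_num : (0:ℝ) < 3)]
      calc |l1 ^ 3 + 3 * (l1 * l2) + l3| ≤ |l1 ^ 3 + 3 * (l1 * l2)| + |l3| := abs_add_le _ _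
        _ ≤ |l1 ^ 3| + |3 * (l1 * l2)| + |l3| := by linarith [abs_add_le (l1 ^ 3) (3 * (l1 * l2))]
        _ = |l1| ^ 3 + 3 * (|l1| * |l2|) + |l3| := by rw [abs_pow, e]
    have := mul_le_mul_of_nonneg_left t hM0.le
    linarith
  · have e1 : |6 * (l1 ^ 2 * l2)| = 6 * (|l1| ^ 2 * |l2|) := by
      rw [abs_mul, abs_mul, abs_pow, abs_of_pos (by norm_num : (0:ℝ) < 6)]
    have e2 : |3 * l2 ^ 2| = 3 * |l2| ^ 2 := by
      rw [abs_mul, abs_pow, abs_of_pos (by norm_num : (0:ℝ) < 3)]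
    have e3 : |4 * (l1 * l3)| = 4 * (|l1| * |l3|) := by
      rw [abs_mul, abs_mul, abs_of_pos (by norm_num : (0:ℝ) < 4)]
    have t : |l1 ^ 4 + 6 * (l1 ^ 2 * l2) + 3 * l2 ^ 2 + 4 * (l1 * l3) + l4| ≤
        |l1| ^ 4 + 6 * (|l1| ^ 2 * |l2|) + 3 * |l2| ^ 2 + 4 * (|l1| * |l3|) + |l4| := by
      have s1 := abs_add_le (l1 ^ 4 + 6 * (l1 ^ 2 * l2) + 3 * l2 ^ 2 + 4 * (l1 * l3)) l4
      have s2 := abs_add_le (l1 ^ 4 + 6 * (l1 ^ 2 * l2) + 3 * l2 ^ 2) (4 * (l1 * l3))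
      have s3 := abs_add_le (l1 ^ 4 + 6 * (l1 ^ 2 * l2)) (3 * l2 ^ 2)
      have s4 := abs_add_le (l1 ^ 4) (6 * (l1 ^ 2 * l2))
      rw [e3] at s2
      rw [e2] at s3
      rw [e1, abs_pow] at s4
      linarith
    have := mul_le_mul_of_nonneg_left t hM0.le
    linarith

end
end Stmt12

open Filter in
/-- uniform bounds for higher derivatives of the saddle point.
Suppose `n/(w α(n)) > 1` for all large `n` and all `w ∈ (1−δ, 1+δ)`, and
`α(n)/n → 0`, where `x n w = x_{n,α}(w)` is the positive solution of
`∑_{j=1}^{α(n)} x^j = n/w`.  Then there are `C` and `N` such that for all `n ≥ N`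
and all `w ∈ (1−δ, 1+δ)`, the second, third and fourth derivatives of
`w ↦ x_{n,α}(w)` divided by `x_{n,α}(w)` are bounded by `C/α(n)` in absolute
value. -/
theorem stmt_12 (α : ℕ → ℕ) (hα : ∀ n, 1 ≤ α n)
    (δ : ℝ) (hδ0 : 0 < δ) (hδ1 : δ < 1)
    (hbig : ∀ᶠ n : ℕ in atTop, ∀ w ∈ Set.Ioo (1 - δ) (1 + δ),
      1 < (n : ℝ) / (w * α n))
    (hαn : Tendsto (fun n : ℕ => (α n : ℝ) / n) atTop (nhds 0))
    (x : ℕ → ℝ → ℝ)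
    (hx : ∀ n, 1 ≤ n → ∀ w : ℝ, 0 < w →
      0 < x n w ∧ ∑ j ∈ Finset.Icc 1 (α n), x n w ^ j = (n : ℝ) / w) :
    ∃ C : ℝ, ∃ N : ℕ, ∀ n ≥ N, ∀ w ∈ Set.Ioo (1 - δ) (1 + δ),
      |iteratedDeriv 2 (x n) w / x n w| ≤ C / α n ∧
      |iteratedDeriv 3 (x n) w / x n w| ≤ C / α n ∧
      |iteratedDeriv 4 (x n) w / x n w| ≤ C / α n := by
  classical
  obtain ⟨N0, hN0⟩ := eventually_atTop.1 hbig
  have hδ' : (0:ℝ) < 1 - δ := by linarith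
  set K : ℝ := 2 / (1 - δ) with hKdef
  have hK2 : 2 ≤ K := by
    rw [hKdef, le_div_iff₀ hδ']; linarith
  refine ⟨405 * K ^ 4, max N0 1, fun n hn w hw => ?_⟩
  obtain ⟨hw1, hw2⟩ := hw
  have hn1 : 1 ≤ n := le_trans (le_max_right N0 1) hn
  have hw0 : (0:ℝ) < w := lt_trans hδ' hw1
  set m := α n with hmdef
  have hm : 1 ≤ m := hα n
  have hm1 : (1:ℝ) ≤ (m:ℝ) := by exact_mod_cast hm
  have hm0 : (0:ℝ) < (m:ℝ) := by linarith
  set c : ℝ := (n : ℝ) with hcdef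
  have hc1 : (1:ℝ) ≤ c := by rw [hcdef]; exact_mod_cast hn1
  have hbign : 1 < c / (w * (m:ℝ)) := hN0 n (le_trans (le_max_left N0 1) hn) w ⟨hw1, hw2⟩
  have hxw := hx n hn1
  have hKw : 2 ≤ K * w := by
    rw [hKdef, div_mul_eq_mul_div, le_div_iff₀ hδ']; linarith
  -- smoothness of x n on positive reals
  have hsm : ∀ v : ℝ, 0 < v → ContDiffAt ℝ 4 (x n) v :=
    Stmt12.contDiffAt_sol m hm c (x n) (fun v hv => ⟨(hxw v hv).1, (hxw v hv).2⟩)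
  -- logarithm
  set L : ℝ → ℝ := fun v => Real.log (x n v) with hLdef
  have hxe : ∀ v : ℝ, 0 < v → x n v = Real.exp (L v) := fun v hv =>
    (Real.exp_log (hxw v hv).1).symm
  have hLsm : ∀ v : ℝ, 0 < v → ContDiffAt ℝ 4 L v := fun v hv =>
    (hsm v hv).log (ne_of_gt (hxw v hv).1)
  have hLon : ContDiffOn ℝ 4 L (Set.Ioi 0) :=
    (isOpen_Ioi.contDiffOn_iff).2 fun v hv => hLsm v hv
  set L1 : ℝ → ℝ := deriv L with hL1def
  set L2 : ℝ → ℝ := deriv L1 with hL2def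
  set L3 : ℝ → ℝ := deriv L2 with hL3def
  set L4 : ℝ → ℝ := deriv L3 with hL4def
  have hL1on : ContDiffOn ℝ 3 L1 (Set.Ioi 0) := hLon.deriv_of_isOpen isOpen_Ioi (by norm_num)
  have hL2on : ContDiffOn ℝ 2 L2 (Set.Ioi 0) := hL1on.deriv_of_isOpen isOpen_Ioi (by norm_num)
  have hL3on : ContDiffOn ℝ 1 L3 (Set.Ioi 0) := hL2on.deriv_of_isOpen isOpen_Ioi (by norm_num)
  have hdL : ∀ v : ℝ, 0 < v → HasDerivAt L (L1 v) v := fun v hv =>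
    ((hLsm v hv).differentiableAt (by norm_num)).hasDerivAt
  have hdL1 : ∀ v : ℝ, 0 < v → HasDerivAt L1 (L2 v) v := fun v hv =>
    (((hL1on.contDiffAt (isOpen_Ioi.mem_nhds hv)).differentiableAt (by norm_num)).hasDerivAt)
  have hdL2 : ∀ v : ℝ, 0 < v → HasDerivAt L2 (L3 v) v := fun v hv =>
    (((hL2on.contDiffAt (isOpen_Ioi.mem_nhds hv)).differentiableAt (by norm_num)).hasDerivAt)
  have hdL3 : ∀ v : ℝ, 0 < v → HasDerivAt L3 (L4 v) v := fun v hv =>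
    (((hL3on.contDiffAt (isOpen_Ioi.mem_nhds hv)).differentiableAt (by norm_num)).hasDerivAt)
  -- the weighted sums
  set T : ℕ → ℝ → ℝ := fun k v => ∑ j ∈ Finset.Icc 1 m, (j : ℝ) ^ k * Real.exp (j * L v)
    with hTdef
  have hdT : ∀ (k : ℕ) (v : ℝ), 0 < v → HasDerivAt (T k) (T (k + 1) v * L1 v) v :=
    fun k v hv => Stmt12.hasDerivAt_T m k L v (L1 v) (hdL v hv)
  -- E0
  have hE0 : ∀ v : ℝ, 0 < v → T 0 v = c / v ^ 1 := by
    intro v hv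
    have h1 : T 0 v = ∑ j ∈ Finset.Icc 1 m, x n v ^ j := by
      apply Finset.sum_congr rfl
      intro j hj
      rw [pow_zero, one_mul, Real.exp_nat_mul, ← hxe v hv]
    rw [h1, (hxw v hv).2, pow_one]
  -- E1
  have hE1 : ∀ v : ℝ, 0 < v → T 1 v * L1 v = -c / v ^ 2 := by
    intro v hv
    have h2 : HasDerivAt (fun u : ℝ => c / u ^ 1) (-c / v ^ 2) v := by
      have h := Stmt12.hasDerivAt_div_pow c 1 v hv.ne'
      convert h using 1
      norm_num
    exact Stmt12.derivEq hv hE0 (hdT 0 v hv) h2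
  -- E2
  have hE2 : ∀ v : ℝ, 0 < v → T 2 v * L1 v ^ 2 + T 1 v * L2 v = 2 * c / v ^ 3 := by
    intro v hv
    have h1 : HasDerivAt (fun u => T 1 u * L1 u)
        (T 2 v * L1 v * L1 v + T 1 v * L2 v) v := (hdT 1 v hv).mul (hdL1 v hv)
    have h2 : HasDerivAt (fun u : ℝ => -c / u ^ 2) (2 * c / v ^ 3) v := by
      have h := Stmt12.hasDerivAt_div_pow (-c) 2 v hv.ne'
      convert h using 1
      rw [div_eq_div_iff (by positivity) (by positivity)]
      ring
    have := Stmt12.derivEq hv hE1 h1 h2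
    linear_combination this
  -- E3
  have hE3 : ∀ v : ℝ, 0 < v →
      T 3 v * L1 v ^ 3 + 3 * (T 2 v * (L1 v * L2 v)) + T 1 v * L3 v = -(6 * c) / v ^ 4 := by
    intro v hv
    have h1 : HasDerivAt (fun u => T 2 u * L1 u ^ 2 + T 1 u * L2 u)
        ((T 3 v * L1 v) * L1 v ^ 2 + T 2 v * (2 * L1 v ^ 1 * L2 v)
          + ((T 2 v * L1 v) * L2 v + T 1 v * L3 v)) v := by
      have ha := (hdT 2 v hv).fun_mul ((hdL1 v hv).fun_pow 2)
      have hb := (hdT 1 v hv).fun_mul (hdL2 v hv)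
      refine (ha.fun_add hb).congr_deriv ?_
      try norm_num
    have h2 : HasDerivAt (fun u : ℝ => 2 * c / u ^ 3) (-(6 * c) / v ^ 4) v := by
      have h := Stmt12.hasDerivAt_div_pow (2 * c) 3 v hv.ne'
      convert h using 1
      rw [div_eq_div_iff (by positivity) (by positivity)]
      ring
    have := Stmt12.derivEq hv hE2 h1 h2
    linear_combination this
  -- E4 (only needed at w)
  have hE4 : T 4 w * L1 w ^ 4 + 6 * T 3 w * L1 w ^ 2 * L2 w + 3 * T 2 w * L2 w ^ 2
      + 4 * T 2 w * L1 w * L3 w + T 1 w * L4 w = 24 * c / w ^ 5 := by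
    have h1 : HasDerivAt
        (fun u => T 3 u * L1 u ^ 3 + 3 * (T 2 u * (L1 u * L2 u)) + T 1 u * L3 u)
        ((T 4 w * L1 w) * L1 w ^ 3 + T 3 w * (3 * L1 w ^ 2 * L2 w)
          + 3 * ((T 3 w * L1 w) * (L1 w * L2 w) + T 2 w * (L2 w * L2 w + L1 w * L3 w))
          + ((T 2 w * L1 w) * L3 w + T 1 w * L4 w)) w := by
      have ha := (hdT 3 w hw0).fun_mul ((hdL1 w hw0).fun_pow 3)
      have hb := ((hdT 2 w hw0).fun_mul ((hdL1 w hw0).fun_mul (hdL2 w hw0))).const_mul (3:ℝ)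
      have hc := (hdT 1 w hw0).fun_mul (hdL3 w hw0)
      refine ((ha.fun_add hb).fun_add hc).congr_deriv ?_
      try norm_num
      try ring
    have h2 : HasDerivAt (fun u : ℝ => -(6 * c) / u ^ 4) (24 * c / w ^ 5) w := by
      have h := Stmt12.hasDerivAt_div_pow (-(6 * c)) 4 w hw0.ne'
      convert h using 1
      rw [div_eq_div_iff (by positivity) (by positivity)]
      ring
    have := Stmt12.derivEq hw0 hE3 h1 h2
    linear_combination this
  -- derivatives of x n
  have hdX : ∀ v : ℝ, 0 < v → HasDerivAt (x n) (Real.exp (L v) * L1 v) v := by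
    intro v hv
    exact ((hdL v hv).exp).congr_of_eventuallyEq
      (Filter.eventually_of_mem (Ioi_mem_nhds hv) fun u hu => hxe u hu)
  have hX1 : ∀ v : ℝ, 0 < v → deriv (x n) v = Real.exp (L v) * L1 v := fun v hv =>
    (hdX v hv).deriv
  have hdX1 : ∀ v : ℝ, 0 < v →
      HasDerivAt (deriv (x n)) (Real.exp (L v) * (L1 v ^ 2 + L2 v)) v := by
    intro v hv
    have h : HasDerivAt (fun u => Real.exp (L u) * L1 u)
        (Real.exp (L v) * (L1 v ^ 2 + L2 v)) v := by
      have := ((hdL v hv).exp).fun_mul (hdL1 v hv)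
      exact this.congr_deriv (by ring)
    exact h.congr_of_eventuallyEq
      (Filter.eventually_of_mem (Ioi_mem_nhds hv) fun u hu => hX1 u hu)
  have hX2 : ∀ v : ℝ, 0 < v →
      deriv (deriv (x n)) v = Real.exp (L v) * (L1 v ^ 2 + L2 v) := fun v hv =>
    (hdX1 v hv).deriv
  have hdX2 : ∀ v : ℝ, 0 < v → HasDerivAt (deriv (deriv (x n)))
      (Real.exp (L v) * (L1 v ^ 3 + 3 * (L1 v * L2 v) + L3 v)) v := by
    intro v hv
    have h : HasDerivAt (fun u => Real.exp (L u) * (L1 u ^ 2 + L2 u))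
        (Real.exp (L v) * (L1 v ^ 3 + 3 * (L1 v * L2 v) + L3 v)) v := by
      have := ((hdL v hv).exp).fun_mul (((hdL1 v hv).fun_pow 2).fun_add (hdL2 v hv))
      refine this.congr_deriv ?_
      try norm_num
      try ring
    exact h.congr_of_eventuallyEq
      (Filter.eventually_of_mem (Ioi_mem_nhds hv) fun u hu => hX2 u hu)
  have hX3 : ∀ v : ℝ, 0 < v → deriv (deriv (deriv (x n))) v
      = Real.exp (L v) * (L1 v ^ 3 + 3 * (L1 v * L2 v) + L3 v) := fun v hv =>
    (hdX2 v hv).deriv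
  have hdX3 : HasDerivAt (deriv (deriv (deriv (x n))))
      (Real.exp (L w) * (L1 w ^ 4 + 6 * (L1 w ^ 2 * L2 w) + 3 * L2 w ^ 2
        + 4 * (L1 w * L3 w) + L4 w)) w := by
    have h : HasDerivAt (fun u => Real.exp (L u) * (L1 u ^ 3 + 3 * (L1 u * L2 u) + L3 u))
        (Real.exp (L w) * (L1 w ^ 4 + 6 * (L1 w ^ 2 * L2 w) + 3 * L2 w ^ 2
          + 4 * (L1 w * L3 w) + L4 w)) w := by
      have := ((hdL w hw0).exp).fun_mul ((((hdL1 w hw0).fun_pow 3).fun_add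
        (((hdL1 w hw0).fun_mul (hdL2 w hw0)).const_mul (3:ℝ))).fun_add (hdL3 w hw0))
      refine this.congr_deriv ?_
      try norm_num
      try ring
    exact h.congr_of_eventuallyEq
      (Filter.eventually_of_mem (Ioi_mem_nhds hw0) fun u hu => hX3 u hu)
  have hX4 : deriv (deriv (deriv (deriv (x n)))) w
      = Real.exp (L w) * (L1 w ^ 4 + 6 * (L1 w ^ 2 * L2 w) + 3 * L2 w ^ 2
        + 4 * (L1 w * L3 w) + L4 w) := hdX3.deriv
  -- x n w > 1, so L w ≥ 0
  have hx1 : 1 < x n w := by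
    have hwm : (0:ℝ) < w * (m:ℝ) := by positivity
    rw [lt_div_iff₀ hwm] at hbign
    by_contra hle
    push_neg at hle
    have hsum : c / w ≤ (m:ℝ) := by
      rw [← (hxw w hw0).2]
      calc ∑ j ∈ Finset.Icc 1 m, x n w ^ j ≤ ∑ _j ∈ Finset.Icc 1 m, (1:ℝ) :=
            Finset.sum_le_sum fun j _ => pow_le_one₀ (hxw w hw0).1.le hle
        _ = (m:ℝ) := by simp
    rw [div_le_iff₀ hw0] at hsum
    nlinarith
  have hL0 : 0 ≤ L w := Real.log_nonneg hx1.le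
  -- T-estimates at w
  have ht0w : T 0 w * w = c := by
    rw [hE0 w hw0, pow_one]
    field_simp
  have htp : ∀ k, 0 < T k w := fun k => Stmt12.T_pos m k hm (L w)
  have hmt0 : (m:ℝ) * T 0 w ≤ 2 * T 1 w := by
    have h := Stmt12.T_cheb m hm (L w) hL0
    linarith [h]
  have ht2l : T 2 w ≤ (m:ℝ) ^ 2 * T 0 w := Stmt12.T_le m 2 (L w)
  have ht3l : T 3 w ≤ (m:ℝ) ^ 3 * T 0 w := Stmt12.T_le m 3 (L w)
  have ht4l : T 4 w ≤ (m:ℝ) ^ 4 * T 0 w := Stmt12.T_le m 4 (L w)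
  -- product-form equations at w
  have ce1 : T 1 w * L1 w * w ^ 2 = -(T 0 w * w) := by
    have h := hE1 w hw0
    have h2 : T 1 w * L1 w * w ^ 2 = -c := by
      rw [h]; field_simp
    rw [h2, ht0w]
  have ce2 : (T 2 w * L1 w ^ 2 + T 1 w * L2 w) * w ^ 3 = 2 * (T 0 w * w) := by
    have h := hE2 w hw0
    have h2 : (T 2 w * L1 w ^ 2 + T 1 w * L2 w) * w ^ 3 = 2 * c := by
      rw [h]; field_simp
      try ring
    rw [h2, ht0w]
  have ce3 : (T 3 w * L1 w ^ 3 + 3 * (T 2 w * (L1 w * L2 w)) + T 1 w * L3 w) * w ^ 4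
      = -(6 * (T 0 w * w)) := by
    have h := hE3 w hw0
    have h2 : (T 3 w * L1 w ^ 3 + 3 * (T 2 w * (L1 w * L2 w)) + T 1 w * L3 w) * w ^ 4
        = -(6 * c) := by
      rw [h]; field_simp
    rw [h2, ht0w]
  have ce4 : (T 4 w * L1 w ^ 4 + 6 * T 3 w * L1 w ^ 2 * L2 w + 3 * T 2 w * L2 w ^ 2
      + 4 * T 2 w * L1 w * L3 w + T 1 w * L4 w) * w ^ 5 = 24 * (T 0 w * w) := by
    have h2 : (T 4 w * L1 w ^ 4 + 6 * T 3 w * L1 w ^ 2 * L2 w + 3 * T 2 w * L2 w ^ 2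
        + 4 * T 2 w * L1 w * L3 w + T 1 w * L4 w) * w ^ 5 = 24 * c := by
      rw [hE4]; field_simp
      try ring
    rw [h2, ht0w]
  -- apply the bounds lemma
  obtain ⟨b1, b2, b3, b4⟩ := Stmt12.bounds K (m:ℝ) w (T 0 w) (T 1 w) (T 2 w) (T 3 w) (T 4 w)
    (L1 w) (L2 w) (L3 w) (L4 w) hK2 hKw hw0 hm1 (htp 0) (htp 1) (htp 2) (htp 3) (htp 4)
    hmt0 ht2l ht3l ht4l ce1 ce2 ce3 ce4
  obtain ⟨f2, f3, f4⟩ := Stmt12.finalcomb K (m:ℝ) (L1 w) (L2 w) (L3 w) (L4 w) hK2 hm1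
    b1 b2 b3 b4
  have i2 : iteratedDeriv 2 (x n) = deriv (deriv (x n)) := by
    rw [show (2:ℕ) = 1 + 1 from rfl, iteratedDeriv_succ, iteratedDeriv_one]
  have i3 : iteratedDeriv 3 (x n) = deriv (deriv (deriv (x n))) := by
    rw [show (3:ℕ) = 2 + 1 from rfl, iteratedDeriv_succ, i2]
  have i4 : iteratedDeriv 4 (x n) = deriv (deriv (deriv (deriv (x n)))) := by
    rw [show (4:ℕ) = 3 + 1 from rfl, iteratedDeriv_succ, i3]
  have hexp : Real.exp (L w) ≠ 0 := Real.exp_ne_zero _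
  refine ⟨?_, ?_, ?_⟩
  · rw [i2, hX2 w hw0, hxe w hw0, mul_comm, mul_div_assoc, div_self hexp, mul_one]
    rw [le_div_iff₀ hm0]
    exact f2
  · rw [i3, hX3 w hw0, hxe w hw0, mul_comm, mul_div_assoc, div_self hexp, mul_one]
    rw [le_div_iff₀ hm0]
    exact f3
  · rw [i4, hX4, hxe w hw0, mul_comm, mul_div_assoc, div_self hexp, mul_one]
    rw [le_div_iff₀ hm0]
    exact f4
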